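/- Let n ≥ 1, let i ∈ [n], and let σ, τ ∈ S_n with σ(i) = i and τ(i) = i. Define u_σ ∈ S([n]^2) by u_σ(a,b) = (σ(a), b) if b = i and u_σ(a,b) = (a,b) if b ≠ i, and define v_τ ∈ S([n]^2) by v_τ(a,b) = (a, τ(b)) if a = i and v_τ(a,b) = (a,b) if a ≠ i. Then u_σ is compatible with v_τ if and only if στ = τσ in S_n. -/
import Mathlib


/-- The permutation `u ⊗ 1` of `[n]³`, acting as `(x,y,z) ↦ (u(x,y), z)`. -/
def tensorOne {n : ℕ} (u : Equiv.Perm (Fin n × Fin n)) :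
    Equiv.Perm (Fin n × Fin n × Fin n) :=
  (Equiv.prodAssoc (Fin n) (Fin n) (Fin n)).permCongr (u.prodCongr (Equiv.refl (Fin n)))

/-- The permutation `1 ⊗ u` of `[n]³`, acting as `(x,y,z) ↦ (x, u(y,z))`. -/
def oneTensor {n : ℕ} (u : Equiv.Perm (Fin n × Fin n)) :
    Equiv.Perm (Fin n × Fin n × Fin n) :=
  (Equiv.refl (Fin n)).prodCongr u

/-- `u` is compatible with `v` if `(v ⊗ 1)(1 ⊗ u) = (1 ⊗ u)(v ⊗ 1)` in `S([n]³)`. -/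
def Compatible {n : ℕ} (u v : Equiv.Perm (Fin n × Fin n)) : Prop :=
  tensorOne v * oneTensor u = oneTensor u * tensorOne v

lemma tensorOne_apply {n : ℕ} (u : Equiv.Perm (Fin n × Fin n)) (x y z : Fin n) :
    tensorOne u (x, y, z) = ((u (x, y)).1, (u (x, y)).2, z) := rfl

lemma oneTensor_apply {n : ℕ} (u : Equiv.Perm (Fin n × Fin n)) (x y z : Fin n) :
    oneTensor u (x, y, z) = (x, u (y, z)) := rfl

theorem stmt_11 (n : ℕ) (hn : 1 ≤ n) (i : Fin n) (σ τ : Equiv.Perm (Fin n))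
    (hσ : σ i = i) (hτ : τ i = i)
    (u v : Equiv.Perm (Fin n × Fin n))
    (hu : ∀ a b : Fin n, u (a, b) = if b = i then (σ a, b) else (a, b))
    (hv : ∀ a b : Fin n, v (a, b) = if a = i then (a, τ b) else (a, b)) :
    Compatible u v ↔ σ * τ = τ * σ := by
  constructor
  · intro h
    ext y
    have h' := DFunLike.congr_fun h (i, y, i)
    simp [Equiv.Perm.mul_apply, tensorOne_apply, oneTensor_apply, hu, hv,
      Prod.ext_iff] at h'
    simp only [Equiv.Perm.mul_apply]
    exact congrArg Fin.val h'.symm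
  · intro h
    have hc : ∀ y : Fin n, σ (τ y) = τ (σ y) := fun y => by
      have := DFunLike.congr_fun h y
      simpa using this
    apply Equiv.ext
    rintro ⟨x, y, z⟩
    simp only [Equiv.Perm.mul_apply, tensorOne_apply, oneTensor_apply, hu, hv]
    by_cases hz : z = i <;> by_cases hx : x = i <;>
      simp [hz, hx, hc, hu, hv, tensorOne_apply, oneTensor_apply, Prod.ext_iff]
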